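/- arXiv:0709.1890 — 2 statements merged into one kernel-verified Lean document; each statement's English description precedes it below -/
import Mathlib

section
/- Let b, c ∈ ℂ[y,z] and suppose (b∂y + c∂z)(y(vy − uz)) ∈ ⟨y(vy − uz)⟩ where y and vy − uz are coprime linear forms. Then (b∂y + c∂z)(y) ∈ ⟨y⟩ and (b∂y + c∂z)(vy − uz) ∈ ⟨vy − uz⟩. -/
open MvPolynomial

lemma prime_X0 : Prime (X 0 : MvPolynomial (Fin 2) ℂ) := by
  rw [← MulEquiv.prime_iff (MvPolynomial.finSuccEquiv ℂ 1).toMulEquiv]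
  show Prime ((MvPolynomial.finSuccEquiv ℂ 1) (X 0))
  rw [MvPolynomial.finSuccEquiv_X_zero]
  exact Polynomial.prime_X

lemma prime_X1 : Prime (X 1 : MvPolynomial (Fin 2) ℂ) := by
  have := prime_X0
  rw [← MulEquiv.prime_iff (renameEquiv ℂ (Equiv.swap (0 : Fin 2) 1)).toMulEquiv] at this
  simpa using this

lemma prime_line (u v : ℂ) (hu : u ≠ 0) :
    Prime (C v * X 0 - C u * X 1 : MvPolynomial (Fin 2) ℂ) := by
  have hC : (C u⁻¹ * C u : MvPolynomial (Fin 2) ℂ) = 1 := by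
    rw [← C_mul, inv_mul_cancel₀ hu, C_1]
  set f : MvPolynomial (Fin 2) ℂ →ₐ[ℂ] MvPolynomial (Fin 2) ℂ :=
    aeval ![X 0, C v * X 0 - C u * X 1] with hf
  set finv : MvPolynomial (Fin 2) ℂ →ₐ[ℂ] MvPolynomial (Fin 2) ℂ :=
    aeval ![X 0, C (v/u) * X 0 - C u⁻¹ * X 1] with hfinv
  have h1 : f.comp finv = AlgHom.id ℂ _ := by
    apply algHom_ext
    intro i
    fin_cases i <;>
      simp [hf, hfinv, map_sub, map_mul, div_eq_mul_inv, C_mul]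
    linear_combination (X 1 : MvPolynomial (Fin 2) ℂ) * hC
  have h2 : finv.comp f = AlgHom.id ℂ _ := by
    apply algHom_ext
    intro i
    fin_cases i <;>
      simp [hf, hfinv, map_sub, map_mul, div_eq_mul_inv, C_mul]
    linear_combination ((X 1 : MvPolynomial (Fin 2) ℂ) - C v * X 0) * hC
  let ψ : MvPolynomial (Fin 2) ℂ ≃ₐ[ℂ] MvPolynomial (Fin 2) ℂ := AlgEquiv.ofAlgHom f finv h1 h2
  have hg : ψ (X 1) = C v * X 0 - C u * X 1 := by
    show f (X 1) = _
    simp [hf]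
  have := (MulEquiv.prime_iff ψ.toMulEquiv (p := (X 1 : MvPolynomial (Fin 2) ℂ))).mpr prime_X1
  rwa [show ψ.toMulEquiv (X 1) = C v * X 0 - C u * X 1 from hg] at this

/-- If the derivation `b∂y + c∂z` is tangent to the product
`y(vy − uz)` of the two coprime linear forms `y` and `vy − uz` (coprimality: `u ≠ 0`),
then it is tangent to each factor. -/
theorem tangent_to_product_of_lines
    (b c : MvPolynomial (Fin 2) ℂ) (u v : ℂ) (hu : u ≠ 0)
    (h : b * pderiv 0 (X 0 * (C v * X 0 - C u * X 1)) +
          c * pderiv 1 (X 0 * (C v * X 0 - C u * X 1)) ∈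
        Ideal.span {X 0 * (C v * X 0 - C u * X 1)}) :
    b * pderiv 0 (X 0 : MvPolynomial (Fin 2) ℂ) + c * pderiv 1 (X 0 : MvPolynomial (Fin 2) ℂ) ∈
        Ideal.span {(X 0 : MvPolynomial (Fin 2) ℂ)} ∧
    b * pderiv 0 (C v * X 0 - C u * X 1) + c * pderiv 1 (C v * X 0 - C u * X 1) ∈
        Ideal.span {(C v * X 0 - C u * X 1 : MvPolynomial (Fin 2) ℂ)} := by
  rw [Ideal.mem_span_singleton] at h
  obtain ⟨q, hq⟩ := h
  have hD : b * pderiv 0 (X 0 * (C v * X 0 - C u * X 1)) +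
      c * pderiv 1 (X 0 * (C v * X 0 - C u * X 1)) =
      b * (C v * X 0 - C u * X 1) + (C v * b - C u * c) * X 0 := by
    simp [pderiv_mul]
    ring
  rw [hD] at hq
  have hXg : ¬ (X 0 : MvPolynomial (Fin 2) ℂ) ∣ (C v * X 0 - C u * X 1) := by
    rintro ⟨r, hr⟩
    have := congrArg (aeval (R := ℂ) ![(0 : MvPolynomial (Fin 2) ℂ), X 1]) hr
    simp [hu, X_ne_zero, C_eq_zero, sub_eq_zero] at this
  have hgX : ¬ (C v * X 0 - C u * X 1 : MvPolynomial (Fin 2) ℂ) ∣ X 0 := by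
    rintro ⟨r, hr⟩
    have := congrArg (aeval (R := ℂ) ![(X 0 : MvPolynomial (Fin 2) ℂ), C (v/u) * X 0]) hr
    simp only [aeval_X, Matrix.cons_val_zero, Matrix.cons_val_one, Matrix.head_cons,
      map_sub, map_mul, aeval_C, algebraMap_eq] at this
    rw [show (C v * X 0 - C u * (C (v/u) * X 0) : MvPolynomial (Fin 2) ℂ)
        = C (v - u * (v/u)) * X 0 by push_cast [C_sub, C_mul]; ring] at this
    rw [show v - u * (v/u) = 0 by field_simp; ring] at this
    simp at this
  have h1 : (X 0 : MvPolynomial (Fin 2) ℂ) ∣ b := by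
    have hd : (X 0 : MvPolynomial (Fin 2) ℂ) ∣ b * (C v * X 0 - C u * X 1) :=
      ⟨(C v * X 0 - C u * X 1) * q - (C v * b - C u * c), by linear_combination hq⟩
    rcases prime_X0.2.2 _ _ hd with h' | h'
    · exact h'
    · exact absurd h' hXg
  have h2 : (C v * X 0 - C u * X 1 : MvPolynomial (Fin 2) ℂ) ∣ (C v * b - C u * c) := by
    have hd : (C v * X 0 - C u * X 1 : MvPolynomial (Fin 2) ℂ) ∣ (C v * b - C u * c) * X 0 :=
      ⟨X 0 * q - b, by linear_combination hq⟩
    rcases (prime_line u v hu).2.2 _ _ hd with h' | h'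
    · exact h'
    · exact absurd h' hgX
  constructor
  · rw [Ideal.mem_span_singleton]
    obtain ⟨r, hr⟩ := h1
    exact ⟨r, by simp; linear_combination hr⟩
  · rw [Ideal.mem_span_singleton]
    obtain ⟨r, hr⟩ := h2
    refine ⟨r, ?_⟩
    simp
    linear_combination hr
end

section
/- Let J ⊂ S = ℂ[x,y,z] be the homogeneous ideal J = ⟨y² − xz, g₁, g₂⟩ of 2m+1 distinct reduced points lying on the smooth conic y² − xz = 0, where g₁, g₂ have degree m+1 as constructed from the parametrization. Then S/J has a free resolution of the form 0 → S(−2−m)² → S(−1−m)² ⊕ S(−2) → S → S/J → 0, and J is generated by the 2×2 minors of a 3×2 matrix with rows (x, y), (y, z), (α, β) where α, β are homogeneous of degree m. -/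
open MvPolynomial

noncomputable section HBaux

abbrev R2 := MvPolynomial (Fin 2) ℂ
abbrev R3 := MvPolynomial (Fin 3) ℂ

def vphi : R3 →ₐ[ℂ] R2 := aeval ![X 0 ^ 2, X 0 * X 1, X 1 ^ 2]

lemma deg2 (d : Fin 2 →₀ ℕ) : d.degree = d 0 + d 1 := by
  rw [Finsupp.degree_apply, Finset.sum_subset (Finset.subset_univ _)
    (by intro x _ hx; simpa using hx), Fin.sum_univ_two]

lemma deg3 (d : Fin 3 →₀ ℕ) : d.degree = d 0 + d 1 + d 2 := by
  rw [Finsupp.degree_apply, Finset.sum_subset (Finset.subset_univ _)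
    (by intro x _ hx; simpa using hx), Fin.sum_univ_three]

lemma fin2_ext (d : Fin 2 →₀ ℕ) :
    d = Finsupp.single 0 (d 0) + Finsupp.single 1 (d 1) := by
  ext i
  fin_cases i <;> simp [Finsupp.single_apply]

lemma vphi_monomial (a b c : ℕ) (r : ℂ) :
    vphi (monomial (Finsupp.single 0 a + Finsupp.single 1 b + Finsupp.single 2 c) r)
      = monomial (Finsupp.single 0 (2*a+b) + Finsupp.single 1 (b+2*c)) r := by
  have h3 : (monomial (Finsupp.single 0 a + Finsupp.single 1 b + Finsupp.single 2 c) r : R3)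
      = C r * X 0 ^ a * X 1 ^ b * X 2 ^ c := by
    simp [X_pow_eq_monomial, monomial_mul, C_mul_monomial]
  have h2 : (monomial (Finsupp.single 0 (2*a+b) + Finsupp.single 1 (b+2*c)) r : R2)
      = C r * X 0 ^ (2*a+b) * X 1 ^ (b+2*c) := by
    simp [X_pow_eq_monomial, monomial_mul, C_mul_monomial]
  rw [h3, h2]
  simp only [map_mul, map_pow, vphi]
  simp only [aeval_X, aeval_C, Matrix.cons_val_zero, Matrix.cons_val_one, Matrix.head_cons,
    Matrix.cons_val_two, Matrix.tail_cons, MvPolynomial.algebraMap_eq]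
  ring


def Ev (p : R2) : Prop := ∀ d ∈ p.support, (d 0 + d 1) % 2 = 0
def Od (p : R2) : Prop := ∀ d ∈ p.support, (d 0 + d 1) % 2 = 1

lemma Ev_monomial {e : Fin 2 →₀ ℕ} (he : (e 0 + e 1) % 2 = 0) (c : ℂ) :
    Ev (monomial e c) := by
  intro d hd
  rcases Finset.mem_of_subset (support_monomial_subset) hd with h
  simp at h; subst h; exact he

lemma Ev.add {p q : R2} (hp : Ev p) (hq : Ev q) : Ev (p + q) := by
  intro d hd
  rcases Finset.mem_union.mp (MvPolynomial.support_add hd) with h | h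
  · exact hp d h
  · exact hq d h

lemma Ev.mul {p q : R2} (hp : Ev p) (hq : Ev q) : Ev (p * q) := by
  classical
  intro d hd
  rcases Finset.mem_add.mp (MvPolynomial.support_mul p q hd) with ⟨a, ha, b, hb, rfl⟩
  have := hp a ha
  have := hq b hb
  simp only [Finsupp.add_apply]
  omega

lemma X_mul_X_eq (i j : Fin 2) :
    (X i * X j : R2) = monomial (Finsupp.single i 1 + Finsupp.single j 1) 1 := by
  rw [X, X, monomial_mul, one_mul]

lemma Ev_vphi (p : R3) : Ev (vphi p) := by
  induction p using MvPolynomial.induction_on with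
  | C a =>
      rw [show vphi (C a) = C a from by simp [vphi]]
      intro d hd
      rw [mem_support_iff, coeff_C] at hd
      have : (0 : Fin 2 →₀ ℕ) = d := by by_contra h; simp [h] at hd
      subst this; simp
  | add p q hp hq => rw [map_add]; exact hp.add hq
  | mul_X p i hp =>
      rw [map_mul]
      refine hp.mul ?_
      rw [show vphi (X i) = ![X 0 ^ 2, X 0 * X 1, X 1 ^ 2] i from by rw [vphi, aeval_X]]
      fin_cases i
      · rw [show (![X 0 ^ 2, X 0 * X 1, X 1 ^ 2] : Fin 3 → R2) ⟨0, by omega⟩ = X 0 ^ 2 from by norm_num, X_pow_eq_monomial]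
        exact Ev_monomial (by simp [Finsupp.single_apply]) 1
      · rw [show (![X 0 ^ 2, X 0 * X 1, X 1 ^ 2] : Fin 3 → R2) ⟨1, by omega⟩ = X 0 * X 1 from by norm_num, X_mul_X_eq]
        exact Ev_monomial (by simp [Finsupp.single_apply]) 1
      · rw [show (![X 0 ^ 2, X 0 * X 1, X 1 ^ 2] : Fin 3 → R2) ⟨2, by omega⟩ = X 1 ^ 2 from by norm_num, X_pow_eq_monomial]
        exact Ev_monomial (by simp [Finsupp.single_apply]) 1

lemma homog2_support {p : R2} {n : ℕ} (hp : p.IsHomogeneous n) {d} (hd : d ∈ p.support) :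
    d 0 + d 1 = n := by
  have := hp (mem_support_iff.mp hd)
  rwa [show (Finsupp.weight 1 : (Fin 2 →₀ ℕ) →+ ℕ) = Finsupp.weight (fun _ => 1) from rfl, ← Finsupp.degree_eq_weight_one, deg2] at this

lemma homog3_support {p : R3} {n : ℕ} (hp : p.IsHomogeneous n) {d} (hd : d ∈ p.support) :
    d 0 + d 1 + d 2 = n := by
  have := hp (mem_support_iff.mp hd)
  rwa [show (Finsupp.weight 1 : (Fin 3 →₀ ℕ) →+ ℕ) = Finsupp.weight (fun _ => 1) from rfl, ← Finsupp.degree_eq_weight_one, deg3] at this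

def sec (p : R2) : R3 :=
  ∑ d ∈ p.support, monomial
    (Finsupp.single 0 (d 0 / 2) + Finsupp.single 1 (d 0 % 2) + Finsupp.single 2 (d 1 / 2)) (coeff d p)

lemma vphi_sec {p : R2} (hp : Ev p) : vphi (sec p) = p := by
  conv_rhs => rw [p.as_sum]
  rw [sec, map_sum]
  refine Finset.sum_congr rfl fun d hd => ?_
  rw [vphi_monomial]
  have h := hp d hd
  have e1 : 2 * (d 0 / 2) + d 0 % 2 = d 0 := by omega
  have e2 : d 0 % 2 + 2 * (d 1 / 2) = d 1 := by omega
  rw [e1, e2, ← fin2_ext]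

lemma sec_homog {p : R2} {m : ℕ} (hp : p.IsHomogeneous (2 * m)) :
    (sec p).IsHomogeneous m := by
  rw [sec]
  refine IsHomogeneous.sum _ _ _ fun d hd => ?_
  refine isHomogeneous_monomial _ ?_
  have hdd := homog2_support hp hd
  rw [deg3]
  simp [Finsupp.single_apply]
  omega

def Pg (g : R2) : R2 :=
  ∑ d ∈ g.support, if d 0 % 2 = 1 then monomial (d - Finsupp.single 0 1) (coeff d g) else 0

def Qg (g : R2) : R2 :=
  ∑ d ∈ g.support, if d 0 % 2 = 1 then 0 else monomial (d - Finsupp.single 1 1) (coeff d g)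

lemma Pg_support {g : R2} {d} (hd : d ∈ (Pg g).support) :
    ∃ e ∈ g.support, e 0 % 2 = 1 ∧ d = e - Finsupp.single 0 1 := by
  rw [mem_support_iff, Pg, coeff_sum] at hd
  obtain ⟨e, he, hne⟩ := Finset.exists_ne_zero_of_sum_ne_zero hd
  by_cases h : e 0 % 2 = 1
  · rw [if_pos h, coeff_monomial] at hne
    refine ⟨e, he, h, ?_⟩
    by_contra hne'
    exact hne (by rw [if_neg (fun hh => hne' hh.symm)])
  · rw [if_neg h] at hne; simp at hne

lemma Qg_support {g : R2} {d} (hd : d ∈ (Qg g).support) :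
    ∃ e ∈ g.support, ¬ (e 0 % 2 = 1) ∧ d = e - Finsupp.single 1 1 := by
  rw [mem_support_iff, Qg, coeff_sum] at hd
  obtain ⟨e, he, hne⟩ := Finset.exists_ne_zero_of_sum_ne_zero hd
  by_cases h : e 0 % 2 = 1
  · rw [if_pos h] at hne; simp at hne
  · rw [if_neg h, coeff_monomial] at hne
    refine ⟨e, he, h, ?_⟩
    by_contra hne'
    exact hne (by rw [if_neg (fun hh => hne' hh.symm)])

lemma Pg_ev {g : R2} (hg : Od g) : Ev (Pg g) := by
  intro d hd
  obtain ⟨e, he, h1, rfl⟩ := Pg_support hd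
  have := hg e he
  simp [Finsupp.tsub_apply, Finsupp.single_apply]
  omega

lemma Qg_ev {g : R2} (hg : Od g) : Ev (Qg g) := by
  intro d hd
  obtain ⟨e, he, h1, rfl⟩ := Qg_support hd
  have := hg e he
  simp [Finsupp.tsub_apply, Finsupp.single_apply]
  omega

lemma Pg_homog {g : R2} {n : ℕ} (hg : g.IsHomogeneous (n + 1)) :
    (Pg g).IsHomogeneous n := by
  rw [Pg]
  refine IsHomogeneous.sum _ _ _ fun d hd => ?_
  have hdd := homog2_support hg hd
  by_cases h : d 0 % 2 = 1
  · rw [if_pos h]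
    refine isHomogeneous_monomial _ ?_
    rw [deg2]
    simp [Finsupp.tsub_apply, Finsupp.single_apply]
    omega
  · rw [if_neg h]; exact isHomogeneous_zero _ _ _

lemma Qg_homog {g : R2} {n : ℕ} (hg : g.IsHomogeneous (n + 1)) (hodd : Od g) :
    (Qg g).IsHomogeneous n := by
  rw [Qg]
  refine IsHomogeneous.sum _ _ _ fun d hd => ?_
  have hdd := homog2_support hg hd
  by_cases h : d 0 % 2 = 1
  · rw [if_pos h]; exact isHomogeneous_zero _ _ _
  · rw [if_neg h]
    have := hodd d hd
    refine isHomogeneous_monomial _ ?_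
    rw [deg2]
    simp [Finsupp.tsub_apply, Finsupp.single_apply]
    omega

lemma split_odd {g : R2} (hg : Od g) : X 0 * Pg g + X 1 * Qg g = g := by
  conv_rhs => rw [g.as_sum]
  rw [Pg, Qg, Finset.mul_sum, Finset.mul_sum,
    ← Finset.sum_add_distrib]
  refine Finset.sum_congr rfl fun d hd => ?_
  have hodd := hg d hd
  by_cases h : d 0 % 2 = 1
  · have hd0 : Finsupp.single (0 : Fin 2) 1 + (d - Finsupp.single 0 1) = d := by
      ext i
      fin_cases i <;> simp [Finsupp.single_apply, Finsupp.tsub_apply] <;> omega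
    rw [if_pos h, if_pos h, mul_zero, add_zero, X, monomial_mul, one_mul, hd0]
  · have hd1 : Finsupp.single (1 : Fin 2) 1 + (d - Finsupp.single 1 1) = d := by
      ext i
      fin_cases i <;> simp [Finsupp.single_apply, Finsupp.tsub_apply] <;> omega
    rw [if_neg h, if_neg h, mul_zero, zero_add, X, monomial_mul, one_mul, hd1]


def Phi2 : R2 →ₐ[ℂ] R3 := aeval ![X 0, X 2]
def E2 : R2 →ₐ[ℂ] R2 := aeval ![X 0 ^ 2, X 1 ^ 2]

lemma rep3 (p : R3) : ∃ (h : R3) (A B : R2),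
    p = (X 1 ^ 2 - X 0 * X 2) * h + Phi2 A + X 1 * Phi2 B := by
  induction p using MvPolynomial.induction_on with
  | C a =>
      exact ⟨0, C a, 0, by simp [Phi2, aeval_C, MvPolynomial.algebraMap_eq]⟩
  | add p q hp hq =>
      obtain ⟨h, A, B, rfl⟩ := hp
      obtain ⟨h', A', B', rfl⟩ := hq
      exact ⟨h + h', A + A', B + B', by rw [map_add, map_add]; ring⟩
  | mul_X p i hp =>
      obtain ⟨h, A, B, rfl⟩ := hp
      have e0 : Phi2 (X 0) = X 0 := by rw [Phi2, aeval_X]; norm_num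
      have e1 : Phi2 (X 1) = X 2 := by rw [Phi2, aeval_X]; norm_num
      fin_cases i <;>
        simp only [show ((⟨0, by norm_num⟩ : Fin 3)) = 0 from rfl,
          show ((⟨1, by norm_num⟩ : Fin 3)) = 1 from rfl,
          show ((⟨2, by norm_num⟩ : Fin 3)) = 2 from rfl]
      · refine ⟨X 0 * h, X 0 * A, X 0 * B, ?_⟩
        rw [map_mul, map_mul, e0]; ring
      · refine ⟨X 1 * h + Phi2 B, X 0 * X 1 * B, A, ?_⟩
        rw [map_mul, map_mul, e0, e1]; ring
      · refine ⟨X 2 * h, X 1 * A, X 1 * B, ?_⟩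
        rw [map_mul, map_mul, e1]; ring

lemma vphi_Phi2 (A : R2) : vphi (Phi2 A) = E2 A := by
  have : vphi.comp Phi2 = E2 := by
    rw [Phi2, comp_aeval, E2]
    congr 1
    funext i
    fin_cases i
    · show vphi (X 0) = _; rw [vphi, aeval_X]; norm_num
    · show vphi (X 2) = _; rw [vphi, aeval_X]; rfl
  rw [← this]; rfl

lemma E2_monomial (a b : ℕ) (r : ℂ) :
    E2 (monomial (Finsupp.single 0 a + Finsupp.single 1 b) r)
      = monomial (Finsupp.single 0 (2*a) + Finsupp.single 1 (2*b)) r := by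
  have h1 : (monomial (Finsupp.single 0 a + Finsupp.single 1 b) r : R2)
      = C r * X 0 ^ a * X 1 ^ b := by
    simp [X_pow_eq_monomial, monomial_mul, C_mul_monomial]
  have h2 : (monomial (Finsupp.single 0 (2*a) + Finsupp.single 1 (2*b)) r : R2)
      = C r * X 0 ^ (2*a) * X 1 ^ (2*b) := by
    simp [X_pow_eq_monomial, monomial_mul, C_mul_monomial]
  rw [h1, h2]
  simp only [map_mul, map_pow, E2, aeval_X, aeval_C, Matrix.cons_val_zero,
    Matrix.cons_val_one, Matrix.head_cons, MvPolynomial.algebraMap_eq]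
  ring

def Dbl (e : Fin 2 →₀ ℕ) : Fin 2 →₀ ℕ :=
  Finsupp.single 0 (2 * e 0) + Finsupp.single 1 (2 * e 1)

lemma Dbl_apply0 (e : Fin 2 →₀ ℕ) : Dbl e 0 = 2 * e 0 := by
  simp [Dbl, Finsupp.single_apply]
lemma Dbl_apply1 (e : Fin 2 →₀ ℕ) : Dbl e 1 = 2 * e 1 := by
  simp [Dbl, Finsupp.single_apply]

lemma E2_apply (A : R2) :
    E2 A = ∑ e ∈ A.support, monomial (Dbl e) (coeff e A) := by
  conv_lhs => rw [A.as_sum]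
  rw [map_sum]
  refine Finset.sum_congr rfl fun e he => ?_
  rw [show (monomial e (coeff e A) : R2)
    = monomial (Finsupp.single 0 (e 0) + Finsupp.single 1 (e 1)) (coeff e A) from by
      rw [← fin2_ext], E2_monomial]
  rfl

lemma coeff_E2_odd (A : R2) (d : Fin 2 →₀ ℕ) (h : d 0 % 2 = 1 ∨ d 1 % 2 = 1) :
    coeff d (E2 A) = 0 := by
  rw [E2_apply, coeff_sum]
  refine Finset.sum_eq_zero fun e he => ?_
  rw [coeff_monomial, if_neg]
  intro hh
  rcases h with h | h
  · rw [← hh, Dbl_apply0] at h; omega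
  · rw [← hh, Dbl_apply1] at h; omega

lemma coeff_E2_dbl (A : R2) (e : Fin 2 →₀ ℕ) :
    coeff (Dbl e) (E2 A) = coeff e A := by
  rw [E2_apply, coeff_sum]
  have : ∀ e' ∈ A.support,
      (if Dbl e' = Dbl e then coeff e' A else 0) = if e' = e then coeff e' A else 0 := by
    intro e' _
    congr 1
    refine propext ⟨fun hh => ?_, fun hh => by rw [hh]⟩
    have h0 := congrArg (fun d : Fin 2 →₀ ℕ => d 0) hh
    have h1 := congrArg (fun d : Fin 2 →₀ ℕ => d 1) hh
    simp only [Dbl_apply0] at h0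
    simp only [Dbl_apply1] at h1
    have h0' : e' 0 = e 0 := by omega
    have h1' : e' 1 = e 1 := by omega
    rw [fin2_ext e', h0', h1', ← fin2_ext e]
  simp only [coeff_monomial]
  rw [Finset.sum_congr rfl this, Finset.sum_ite_eq' A.support e (fun e' => coeff e' A)]
  by_cases h : e ∈ A.support
  · rw [if_pos h]
  · rw [if_neg h]; exact (notMem_support_iff.mp h).symm

lemma vphi_q : vphi ((X 1 : R3) ^ 2 - X 0 * X 2) = 0 := by
  rw [map_sub, map_pow, map_mul]
  rw [show vphi (X 1) = X 0 * X 1 from by rw [vphi, aeval_X]; norm_num,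
     show vphi (X 0) = X 0 ^ 2 from by rw [vphi, aeval_X]; norm_num,
     show vphi (X 2) = X 1 ^ 2 from by rw [vphi, aeval_X]; rfl]
  ring

lemma ker_vphi {p : R3} (hp : vphi p = 0) :
    p ∈ Ideal.span {(X 1 ^ 2 - X 0 * X 2 : R3)} := by
  obtain ⟨h, A, B, rfl⟩ := rep3 p
  rw [map_add, map_add, map_mul, map_mul, vphi_q, zero_mul, zero_add,
    vphi_Phi2, vphi_Phi2,
    show vphi (X 1) = X 0 * X 1 from by rw [vphi, aeval_X]; norm_num] at hp
  -- hp : E2 A + X 0 * X 1 * E2 B = 0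
  have hA : A = 0 := by
    ext e
    have h1 : coeff (Dbl e) (E2 A + X 0 * X 1 * E2 B) = 0 := by rw [hp]; simp
    rw [coeff_add, coeff_E2_dbl] at h1
    have h2 : coeff (Dbl e) (X 0 * (X 1 * E2 B)) = 0 := by
      rw [coeff_X_mul']
      split_ifs with hs
      · rw [coeff_X_mul']
        split_ifs with hs2
        · apply coeff_E2_odd
          left
          have hv : (Dbl e - Finsupp.single 0 1 - Finsupp.single 1 1 : Fin 2 →₀ ℕ) 0 = 2 * e 0 - 1 := by
            simp [Finsupp.tsub_apply, Finsupp.single_apply, Dbl_apply0]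
          have he0 : 2 * e 0 ≠ 0 := by
            simpa [Dbl_apply0] using Finsupp.mem_support_iff.mp hs
          rw [hv]
          omega
        · rfl
      · rfl
    rw [← mul_assoc] at h2
    rw [h2, add_zero] at h1
    simpa using h1
  have hB : B = 0 := by
    rw [hA, map_zero, zero_add] at hp
    have : E2 B = 0 := by
      rcases mul_eq_zero.mp hp with h | h
      · rcases mul_eq_zero.mp h with h | h
        · exact absurd h (X_ne_zero 0)
        · exact absurd h (X_ne_zero 1)
      · exact h
    ext e
    rw [← coeff_E2_dbl, this]; simp
  rw [hA, hB]
  simp only [map_zero, mul_zero, add_zero]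
  exact Ideal.mem_span_singleton.mpr ⟨h, rfl⟩


lemma vphi_X0 : vphi (X 0) = X 0 ^ 2 := by rw [vphi, aeval_X]; norm_num
lemma vphi_X1 : vphi (X 1) = X 0 * X 1 := by rw [vphi, aeval_X]; norm_num
lemma vphi_X2 : vphi (X 2) = X 1 ^ 2 := by rw [vphi, aeval_X]; rfl

lemma vphi_minor1 {g : R2} (hg : Od g) :
    vphi (X 0 * sec (Pg g) + X 1 * sec (Qg g)) = X 0 * g := by
  rw [map_add, map_mul, map_mul, vphi_sec (Pg_ev hg), vphi_sec (Qg_ev hg), vphi_X0, vphi_X1]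
  conv_rhs => rw [← split_odd hg]
  ring

lemma vphi_minor2 {g : R2} (hg : Od g) :
    vphi (X 1 * sec (Pg g) + X 2 * sec (Qg g)) = X 1 * g := by
  rw [map_add, map_mul, map_mul, vphi_sec (Pg_ev hg), vphi_sec (Qg_ev hg), vphi_X1, vphi_X2]
  conv_rhs => rw [← split_odd hg]
  ring

lemma homog1_eq {L : R2} (hL : L.IsHomogeneous 1) :
    L = C (coeff (Finsupp.single 0 1) L) * X 0 + C (coeff (Finsupp.single 1 1) L) * X 1 := by
  have hne : (Finsupp.single (0 : Fin 2) 1 : Fin 2 →₀ ℕ) ≠ Finsupp.single 1 1 := by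
    intro hh
    have := congrArg (fun d : Fin 2 →₀ ℕ => d 0) hh
    simp [Finsupp.single_apply] at this
  ext d
  rw [coeff_add, coeff_C_mul, coeff_C_mul, coeff_X', coeff_X']
  by_cases h0 : d = Finsupp.single 0 1
  · subst h0
    rw [if_pos rfl, if_neg (fun h => hne h.symm)]
    ring
  · by_cases h1 : d = Finsupp.single 1 1
    · subst h1
      rw [if_neg (fun h => hne h), if_pos rfl]
      ring
    · rw [if_neg (fun h => h0 h.symm), if_neg (fun h => h1 h.symm)]
      have : coeff d L = 0 := by
        by_contra hc
        have hd := homog2_support hL (mem_support_iff.mpr hc)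
        rcases Nat.eq_zero_or_pos (d 0) with h | h
        · apply h1
          rw [fin2_ext d, h, show d 1 = 1 from by omega]
          simp
        · apply h0
          rw [fin2_ext d, show d 0 = 1 from by omega, show d 1 = 0 from by omega]
          simp
      rw [this]; ring

lemma span_LL_eq {L₁ L₂ : R2} (hL₁ : L₁.IsHomogeneous 1) (hL₂ : L₂.IsHomogeneous 1)
    (hind : LinearIndependent ℂ ![L₁, L₂]) :
    Submodule.span ℂ {L₁, L₂} = Submodule.span ℂ {(X 0 : R2), X 1} := by
  have hmemV : ∀ L : R2, L.IsHomogeneous 1 → L ∈ Submodule.span ℂ {(X 0 : R2), X 1} := by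
    intro L hL
    rw [homog1_eq hL]
    have hx0 : (X 0 : R2) ∈ Submodule.span ℂ {(X 0 : R2), X 1} :=
      Submodule.subset_span (Set.mem_insert _ _)
    have hx1 : (X 1 : R2) ∈ Submodule.span ℂ {(X 0 : R2), X 1} :=
      Submodule.subset_span (Set.mem_insert_of_mem _ rfl)
    rw [show (C (coeff (Finsupp.single 0 1) L) * X 0 : R2)
        = coeff (Finsupp.single 0 1) L • X 0 from (MvPolynomial.smul_eq_C_mul _ _).symm,
      show (C (coeff (Finsupp.single 1 1) L) * X 1 : R2)
        = coeff (Finsupp.single 1 1) L • X 1 from (MvPolynomial.smul_eq_C_mul _ _).symm]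
    exact Submodule.add_mem _ (Submodule.smul_mem _ _ hx0) (Submodule.smul_mem _ _ hx1)
  have hle : Submodule.span ℂ {L₁, L₂} ≤ Submodule.span ℂ {(X 0 : R2), X 1} := by
    rw [Submodule.span_le]
    rintro x (rfl | rfl)
    · exact hmemV _ hL₁
    · exact hmemV _ hL₂
  haveI : FiniteDimensional ℂ (Submodule.span ℂ {(X 0 : R2), X 1}) :=
    FiniteDimensional.span_of_finite ℂ (Set.toFinite _)
  have h2 : Module.finrank ℂ (Submodule.span ℂ {L₁, L₂}) = 2 := by
    have := finrank_span_eq_card hind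
    rw [show Set.range ![L₁, L₂] = {L₁, L₂} from by
      simp [Matrix.range_cons, Matrix.range_empty, Set.pair_comm]] at this
    simpa using this
  have h1 : Module.finrank ℂ (Submodule.span ℂ {(X 0 : R2), X 1}) ≤ 2 := by
    classical
    have := finrank_span_le_card (R := ℂ) ({(X 0 : R2), X 1} : Set R2)
    refine le_trans this ?_
    simp only [Set.toFinset_insert, Set.toFinset_singleton]
    exact le_trans (Finset.card_insert_le _ _) (by simp)
  exact Submodule.eq_of_le_of_finrank_le hle (le_trans h1 h2.ge)

end HBaux

/-- The ideal `J = ⟨y² − xz, g₁, g₂⟩` of `2m+1` distinct reduced points on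
the conic `y² − xz = 0` (with `g₁, g₂` of degree `m+1` obtained from the Veronese
parametrization) is generated, Hilbert–Burch style, by the `2×2` minors of the matrix
with rows `(x,y), (y,z), (α,β)` with `α, β` homogeneous of degree `m`; the first syzygy
module of these minors is free on the two columns `(x,y,α)` and `(y,z,β)`, giving the
resolution `0 → S(−2−m)² → S(−1−m)² ⊕ S(−2) → S → S/J → 0`. -/
theorem hilbert_burch_points_on_conic
    (m : ℕ) (f : MvPolynomial (Fin 2) ℂ)
    (hf : f.IsHomogeneous (2 * m + 1)) (hsq : Squarefree f)
    (L₁ L₂ : MvPolynomial (Fin 2) ℂ)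
    (hL₁ : L₁.IsHomogeneous 1) (hL₂ : L₂.IsHomogeneous 1)
    (hind : LinearIndependent ℂ ![L₁, L₂])
    (hL₁f : ¬ L₁ ∣ f) (hL₂f : ¬ L₂ ∣ f)
    (g₁ g₂ : MvPolynomial (Fin 3) ℂ)
    (hg₁ : g₁.IsHomogeneous (m + 1)) (hg₂ : g₂.IsHomogeneous (m + 1))
    (hg₁f : aeval ![X 0 ^ 2, X 0 * X 1, X 1 ^ 2] g₁ = L₁ * f)
    (hg₂f : aeval ![X 0 ^ 2, X 0 * X 1, X 1 ^ 2] g₂ = L₂ * f)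
    (J : Ideal (MvPolynomial (Fin 3) ℂ))
    (hJ : J = Ideal.span {X 1 ^ 2 - X 0 * X 2, g₁, g₂}) :
    ∃ α β : MvPolynomial (Fin 3) ℂ, α.IsHomogeneous m ∧ β.IsHomogeneous m ∧
      J = Ideal.span
        {X 0 * X 2 - X 1 ^ 2, X 0 * β - X 1 * α, X 1 * β - X 2 * α} ∧
      (∀ w : Fin 3 → MvPolynomial (Fin 3) ℂ,
        w 0 * (X 1 * β - X 2 * α) - w 1 * (X 0 * β - X 1 * α) +
            w 2 * (X 0 * X 2 - X 1 ^ 2) = 0 ↔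
          w ∈ Submodule.span (MvPolynomial (Fin 3) ℂ)
            ({![X 0, X 1, α], ![X 1, X 2, β]} : Set (Fin 3 → MvPolynomial (Fin 3) ℂ))) ∧
      (∀ p q : MvPolynomial (Fin 3) ℂ,
        p • ![X 0, X 1, α] + q • ![X 1, X 2, β] = 0 → p = 0 ∧ q = 0) := by
  classical
  have hfne : f ≠ 0 := fun h => hL₁f (h ▸ dvd_zero L₁)
  have hOdf : Od f := fun d hd => by have := homog2_support hf hd; omega
  have hq3'ne : (X 0 * X 2 - X 1 ^ 2 : R3) ≠ 0 := by
    intro h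
    have := congrArg (eval ![1, 0, 1]) h
    simp at this
  set β : R3 := sec (Pg f) with hβdef
  set α : R3 := -sec (Qg f) with hαdef
  have hβh : β.IsHomogeneous m := sec_homog (Pg_homog hf)
  have hαh : α.IsHomogeneous m := (sec_homog (Qg_homog hf hOdf)).neg
  have hΔ2 : vphi (X 0 * β - X 1 * α) = X 0 * f := by
    rw [show X 0 * β - X 1 * α = X 0 * sec (Pg f) + X 1 * sec (Qg f) from by
      rw [hαdef, hβdef]; ring]
    exact vphi_minor1 hOdf
  have hΔ1 : vphi (X 1 * β - X 2 * α) = X 1 * f := by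
    rw [show X 1 * β - X 2 * α = X 1 * sec (Pg f) + X 2 * sec (Qg f) from by
      rw [hαdef, hβdef]; ring]
    exact vphi_minor2 hOdf
  have hq3' : vphi (X 0 * X 2 - X 1 ^ 2) = 0 := by
    rw [show (X 0 * X 2 - X 1 ^ 2 : R3) = -(X 1 ^ 2 - X 0 * X 2) from by ring, map_neg,
      vphi_q, neg_zero]
  have hg₁f' : vphi g₁ = L₁ * f := by rw [vphi]; exact hg₁f
  have hg₂f' : vphi g₂ = L₂ * f := by rw [vphi]; exact hg₂f
  have hvC : ∀ c : ℂ, vphi (C c) = C c := fun c => by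
    rw [vphi, aeval_C, MvPolynomial.algebraMap_eq]
  -- scalars expressing X i through L₁, L₂
  have hspan := span_LL_eq hL₁ hL₂ hind
  have hX0mem : (X 0 : R2) ∈ Submodule.span ℂ {L₁, L₂} := by
    rw [hspan]; exact Submodule.subset_span (Set.mem_insert _ _)
  have hX1mem : (X 1 : R2) ∈ Submodule.span ℂ {L₁, L₂} := by
    rw [hspan]; exact Submodule.subset_span (Set.mem_insert_of_mem _ rfl)
  obtain ⟨u0, v0, hu0⟩ := Submodule.mem_span_pair.mp hX0mem
  obtain ⟨u1, v1, hu1⟩ := Submodule.mem_span_pair.mp hX1mem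
  have hu0' : C u0 * L₁ + C v0 * L₂ = X 0 := by
    rw [← MvPolynomial.smul_eq_C_mul, ← MvPolynomial.smul_eq_C_mul]; exact hu0
  have hu1' : C u1 * L₁ + C v1 * L₂ = X 1 := by
    rw [← MvPolynomial.smul_eq_C_mul, ← MvPolynomial.smul_eq_C_mul]; exact hu1
  refine ⟨α, β, hαh, hβh, ?_, ?_, ?_⟩
  · -- ideal equality
    have hq3mem : (X 1 ^ 2 - X 0 * X 2 : R3) ∈
        Ideal.span {X 0 * X 2 - X 1 ^ 2, X 0 * β - X 1 * α, X 1 * β - X 2 * α} := by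
      rw [show (X 1 ^ 2 - X 0 * X 2 : R3) = -(X 0 * X 2 - X 1 ^ 2) from by ring]
      exact neg_mem (Ideal.subset_span (Set.mem_insert _ _))
    have hq3'mem : (X 0 * X 2 - X 1 ^ 2 : R3) ∈ Ideal.span {X 1 ^ 2 - X 0 * X 2, g₁, g₂} := by
      rw [show (X 0 * X 2 - X 1 ^ 2 : R3) = -(X 1 ^ 2 - X 0 * X 2) from by ring]
      exact neg_mem (Ideal.subset_span (Set.mem_insert _ _))
    rw [hJ]
    apply le_antisymm
    · rw [Ideal.span_le]
      rintro x hx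
      simp only [Set.mem_insert_iff, Set.mem_singleton_iff] at hx
      rcases hx with rfl | hx | hx
      · exact hq3mem
      · rw [hx] -- g₁
        have hker : vphi (g₁ - (C (coeff (Finsupp.single 0 1) L₁) * (X 0 * β - X 1 * α)
            + C (coeff (Finsupp.single 1 1) L₁) * (X 1 * β - X 2 * α))) = 0 := by
          rw [map_sub, map_add, map_mul, map_mul, hΔ2, hΔ1, hg₁f', hvC, hvC]
          linear_combination f * homog1_eq hL₁
        have h1 := ker_vphi hker
        have h2 : Ideal.span {(X 1 ^ 2 - X 0 * X 2 : R3)} ≤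
            Ideal.span {X 0 * X 2 - X 1 ^ 2, X 0 * β - X 1 * α, X 1 * β - X 2 * α} := by
          rw [Ideal.span_le]
          intro x hx
          rw [Set.mem_singleton_iff] at hx
          subst hx
          exact hq3mem
        have h3 : (C (coeff (Finsupp.single 0 1) L₁) * (X 0 * β - X 1 * α)
            + C (coeff (Finsupp.single 1 1) L₁) * (X 1 * β - X 2 * α)) ∈
            Ideal.span {X 0 * X 2 - X 1 ^ 2, X 0 * β - X 1 * α, X 1 * β - X 2 * α} := by
          refine add_mem (Ideal.mul_mem_left _ _ ?_) (Ideal.mul_mem_left _ _ ?_)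
          · exact Ideal.subset_span (Set.mem_insert_of_mem _ (Set.mem_insert _ _))
          · exact Ideal.subset_span
              (Set.mem_insert_of_mem _ (Set.mem_insert_of_mem _ rfl))
        have := add_mem (h2 h1) h3
        simpa using this
      · rw [hx] -- g₂
        have hker : vphi (g₂ - (C (coeff (Finsupp.single 0 1) L₂) * (X 0 * β - X 1 * α)
            + C (coeff (Finsupp.single 1 1) L₂) * (X 1 * β - X 2 * α))) = 0 := by
          rw [map_sub, map_add, map_mul, map_mul, hΔ2, hΔ1, hg₂f', hvC, hvC]
          linear_combination f * homog1_eq hL₂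
        have h1 := ker_vphi hker
        have h2 : Ideal.span {(X 1 ^ 2 - X 0 * X 2 : R3)} ≤
            Ideal.span {X 0 * X 2 - X 1 ^ 2, X 0 * β - X 1 * α, X 1 * β - X 2 * α} := by
          rw [Ideal.span_le]
          intro x hx
          rw [Set.mem_singleton_iff] at hx
          subst hx
          exact hq3mem
        have h3 : (C (coeff (Finsupp.single 0 1) L₂) * (X 0 * β - X 1 * α)
            + C (coeff (Finsupp.single 1 1) L₂) * (X 1 * β - X 2 * α)) ∈
            Ideal.span {X 0 * X 2 - X 1 ^ 2, X 0 * β - X 1 * α, X 1 * β - X 2 * α} := by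
          refine add_mem (Ideal.mul_mem_left _ _ ?_) (Ideal.mul_mem_left _ _ ?_)
          · exact Ideal.subset_span (Set.mem_insert_of_mem _ (Set.mem_insert _ _))
          · exact Ideal.subset_span
              (Set.mem_insert_of_mem _ (Set.mem_insert_of_mem _ rfl))
        have := add_mem (h2 h1) h3
        simpa using this
    · rw [Ideal.span_le]
      rintro x hx
      simp only [Set.mem_insert_iff, Set.mem_singleton_iff] at hx
      have hspanle : Ideal.span {(X 1 ^ 2 - X 0 * X 2 : R3)} ≤
          Ideal.span {X 1 ^ 2 - X 0 * X 2, g₁, g₂} := by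
        rw [Ideal.span_le]
        intro y hy
        rw [Set.mem_singleton_iff] at hy
        subst hy
        exact Ideal.subset_span (Set.mem_insert _ _)
      have hg₁mem : g₁ ∈ Ideal.span {X 1 ^ 2 - X 0 * X 2, g₁, g₂} :=
        Ideal.subset_span (Set.mem_insert_of_mem _ (Set.mem_insert _ _))
      have hg₂mem : g₂ ∈ Ideal.span {X 1 ^ 2 - X 0 * X 2, g₁, g₂} :=
        Ideal.subset_span (Set.mem_insert_of_mem _ (Set.mem_insert_of_mem _ rfl))
      rcases hx with rfl | rfl | rfl
      · exact hq3'mem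
      · -- Δ2
        have hker : vphi ((X 0 * β - X 1 * α) - (C u0 * g₁ + C v0 * g₂)) = 0 := by
          rw [map_sub, map_add, map_mul, map_mul, hΔ2, hg₁f', hg₂f', hvC, hvC]
          linear_combination (-f) * hu0'
        have h1 := hspanle (ker_vphi hker)
        have h3 := add_mem (Ideal.mul_mem_left _ (C u0) hg₁mem)
          (Ideal.mul_mem_left _ (C v0) hg₂mem)
        have := add_mem h1 h3
        simpa using this
      · -- Δ1
        have hker : vphi ((X 1 * β - X 2 * α) - (C u1 * g₁ + C v1 * g₂)) = 0 := by
          rw [map_sub, map_add, map_mul, map_mul, hΔ1, hg₁f', hg₂f', hvC, hvC]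
          linear_combination (-f) * hu1'
        have h1 := hspanle (ker_vphi hker)
        have h3 := add_mem (Ideal.mul_mem_left _ (C u1) hg₁mem)
          (Ideal.mul_mem_left _ (C v1) hg₂mem)
        have := add_mem h1 h3
        simpa using this
  · -- syzygy iff
    intro w
    constructor
    · intro hrel
      have hw01 : vphi (w 0) * X 1 = vphi (w 1) * X 0 := by
        have h := congrArg vphi hrel
        rw [map_add, map_sub, map_mul, map_mul, map_mul, hΔ1, hΔ2, hq3', mul_zero,
          map_zero] at h
        have h2 : (vphi (w 0) * X 1 - vphi (w 1) * X 0) * f = 0 := by linear_combination h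
        rcases mul_eq_zero.mp h2 with h3 | h3
        · exact sub_eq_zero.mp h3
        · exact absurd h3 hfne
      have hdvd : (X 0 : R2) ∣ vphi (w 0) := by
        conv_rhs => rw [(vphi (w 0)).as_sum]
        refine Finset.dvd_sum fun d hd => ?_
        refine X_dvd_monomial.mpr (Or.inr ?_)
        intro hd0
        have hc : coeff (Finsupp.single 1 1 + d) (vphi (w 0) * X 1) ≠ 0 := by
          rw [mul_comm, coeff_X_mul]
          exact mem_support_iff.mp hd
        rw [hw01, mul_comm, coeff_X_mul'] at hc
        apply hc
        rw [if_neg]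
        intro hmem
        have h5 : (Finsupp.single (1 : Fin 2) 1 + d : Fin 2 →₀ ℕ) 0 ≠ 0 := Finsupp.mem_support_iff.mp hmem
        simp [Finsupp.single_apply, hd0] at h5
      obtain ⟨g, hg⟩ := hdvd
      have hw1g : vphi (w 1) = X 1 * g :=
        mul_left_cancel₀ (X_ne_zero (R := ℂ) (0 : Fin 2))
          (by linear_combination -hw01 + X 1 * hg)
      have hOdg : Od g := by
        intro d hd
        have hc : coeff (Finsupp.single 0 1 + d) (vphi (w 0)) ≠ 0 := by
          rw [hg, coeff_X_mul]
          exact mem_support_iff.mp hd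
        have h6 := Ev_vphi (w 0) _ (mem_support_iff.mpr hc)
        simp only [Finsupp.add_apply, Finsupp.single_apply] at h6
        simp at h6
        omega
      have hkA : vphi (w 0 - (X 0 * sec (Pg g) + X 1 * sec (Qg g))) = 0 := by
        rw [map_sub, vphi_minor1 hOdg, hg, sub_self]
      have hkB : vphi (w 1 - (X 1 * sec (Pg g) + X 2 * sec (Qg g))) = 0 := by
        rw [map_sub, vphi_minor2 hOdg, hw1g, sub_self]
      obtain ⟨c, hc⟩ := Ideal.mem_span_singleton.mp (ker_vphi hkA)
      obtain ⟨c', hc'⟩ := Ideal.mem_span_singleton.mp (ker_vphi hkB)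
      set A : R3 := sec (Pg g)
      set B : R3 := sec (Qg g)
      have hw2 : w 2 = A * α + B * β + c * (X 1 * β - X 2 * α) - c' * (X 0 * β - X 1 * α) := by
        have hz : (X 0 * X 2 - X 1 ^ 2) *
            (w 2 - (A * α + B * β + c * (X 1 * β - X 2 * α) - c' * (X 0 * β - X 1 * α)))
            = 0 := by
          linear_combination hrel - (X 1 * β - X 2 * α) * hc + (X 0 * β - X 1 * α) * hc'
        rcases mul_eq_zero.mp hz with h | h
        · exact absurd h hq3'ne
        · exact (sub_eq_zero.mp h)
      refine Submodule.mem_span_pair.mpr ⟨A - c * X 2 + c' * X 1, B + c * X 1 - c' * X 0, ?_⟩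
      funext i
      fin_cases i <;>
        simp only [show ((⟨0, by norm_num⟩ : Fin 3)) = 0 from rfl,
          show ((⟨1, by norm_num⟩ : Fin 3)) = 1 from rfl,
          show ((⟨2, by norm_num⟩ : Fin 3)) = 2 from rfl,
          Pi.add_apply, Pi.smul_apply, smul_eq_mul, Matrix.cons_val_zero,
          Matrix.cons_val_one, Matrix.head_cons, Matrix.cons_val_two, Matrix.tail_cons]
      · linear_combination -hc
      · linear_combination -hc'
      · linear_combination -hw2
    · intro hmem
      obtain ⟨p, q, hpq⟩ := Submodule.mem_span_pair.mp hmem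
      have h0 := congrFun hpq 0
      have h1 := congrFun hpq 1
      have h2 := congrFun hpq 2
      simp only [Pi.add_apply, Pi.smul_apply, smul_eq_mul, Matrix.cons_val_zero,
        Matrix.cons_val_one, Matrix.head_cons, Matrix.cons_val_two, Matrix.tail_cons]
        at h0 h1 h2
      linear_combination (-(X 1 * β - X 2 * α)) * h0 + (X 0 * β - X 1 * α) * h1
        + (-(X 0 * X 2 - X 1 ^ 2)) * h2
  · -- independence
    intro p q h
    have h0 := congrFun h 0
    have h1 := congrFun h 1
    simp only [Pi.add_apply, Pi.smul_apply, smul_eq_mul, Matrix.cons_val_zero,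
      Matrix.cons_val_one, Matrix.head_cons, Pi.zero_apply] at h0 h1
    have hp0 : p * (X 0 * X 2 - X 1 ^ 2) = 0 := by
      linear_combination X 2 * h0 - X 1 * h1
    have hp : p = 0 := by
      rcases mul_eq_zero.mp hp0 with h' | h'
      · exact h'
      · exact absurd h' hq3'ne
    subst hp
    have hq : q * X 1 = 0 := by linear_combination h0
    rcases mul_eq_zero.mp hq with h' | h'
    · exact ⟨rfl, h'⟩
    · exact absurd h' (X_ne_zero _)
end
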